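/- Let 1 \leq K \leq N and M \geq 1 be integers and L \geq 0 a real number. Let W_1,\dots,W_M, Q, and A_\theta^{(i)} (for \theta \in [M], i \in [N]) be random variables; for \Lambda \subseteq [M] write W_\Lambda = (W_j)_{j\in\Lambda}. Assume: (i) H(A_\theta^\Gamma | W_\Lambda, Q) = H(A_{\theta'}^\Gamma | W_\Lambda, Q) for all \theta, \theta' \in [M], all \Lambda \subseteq [M], and all \Gamma \subseteq [N] with |\Gamma| = K; (ii) H(W_\theta | A_\theta^{[N]}, W_\Lambda, Q) = 0 for all \theta \in [M] and all \Lambda \subseteq [M]; (iii) H(W_\theta | W_\Lambda, Q) = L for all \Lambda \subseteq [M] and all \theta \in [M] \setminus \Lambda; (iv) H(A_\theta^{[N]} | W_{[M]}, Q) = 0 for all \theta \in [M]; and (v) the scheme is capacity-achieving, i.e., \sum_{i=1}^{N} H(A_\theta^{(i)}) = L \cdot \sum_{i=0}^{M-1} (K/N)^i =: D for every \theta \in [M]. Then for every \theta \in [M]: (a) H(A_\theta^{[N]} | Q) = D; (b) H(A_\theta^{[N]} | W_\theta, Q) = D - L; and (c) H(A_\theta^{[N]} | W_{[M]\setminus\{\theta\}},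 Q) = L. -/

import Mathlib

/-- Shannon entropy (natural logarithm) of a finitely-valued random variable `X`
on a finite probability space with probability mass function `μ`. -/
noncomputable def entropy {Ω V : Type*} [Fintype Ω] [Fintype V] [DecidableEq V]
    (μ : Ω → ℝ) (X : Ω → V) : ℝ :=
  ∑ v : V, Real.negMulLog (∑ ω ∈ Finset.univ.filter (fun ω => X ω = v), μ ω)

/-- Conditional Shannon entropy `H(X | Y) = H(X, Y) - H(Y)`. -/
noncomputable def condEntropy {Ω V U : Type*} [Fintype Ω] [Fintype V] [Fintype U]
    [DecidableEq V] [DecidableEq U] (μ : Ω → ℝ) (X : Ω → V) (Y : Ω → U) : ℝ :=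
  entropy μ (fun ω => (X ω, Y ω)) - entropy μ Y

/-- The joint random variable `(A i)_{i ∈ Γ}` of the subfamily of `(A i)_{i ∈ [N]}`
indexed by the subset `Γ`. -/
def jointOn {Ω V : Type*} {N : ℕ} (Γ : Finset (Fin N)) (A : Fin N → Ω → V) :
    Ω → (Fin N → Option V) :=
  fun ω i => if i ∈ Γ then some (A i ω) else none

set_option linter.unusedSectionVars false
namespace PIR5

open Finset Real

variable {Ω : Type*} [Fintype Ω] {μ : Ω → ℝ}

/-- probability mass function of `X` -/
noncomputable def pm {V : Type*} [DecidableEq V] (μ : Ω → ℝ) (X : Ω → V) (v : V) : ℝ :=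
  ∑ ω ∈ Finset.univ.filter (fun ω => X ω = v), μ ω

variable {V U U' : Type*} [Fintype V] [Fintype U] [Fintype U']
  [DecidableEq V] [DecidableEq U] [DecidableEq U']

lemma entropy_eq (μ : Ω → ℝ) (X : Ω → V) :
    entropy μ X = ∑ v, Real.negMulLog (pm μ X v) := rfl

lemma pm_nonneg (hμ : ∀ ω, 0 ≤ μ ω) (X : Ω → V) (v : V) : 0 ≤ pm μ X v :=
  Finset.sum_nonneg fun ω _ => hμ ω

lemma pm_fiber (Z : Ω → U) (h : U → U') (t : U') :
    pm μ (fun ω => h (Z ω)) t = ∑ u ∈ Finset.univ.filter (fun u => h u = t), pm μ Z u := by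
  simp only [pm]
  rw [← Finset.sum_fiberwise_of_maps_to
      (t := Finset.univ.filter (fun u => h u = t)) (g := Z)
      (fun ω hω => Finset.mem_filter.mpr ⟨Finset.mem_univ _, (Finset.mem_filter.mp hω).2⟩) μ]
  refine Finset.sum_congr rfl fun u hu => Finset.sum_congr ?_ (fun _ _ => rfl)
  have hu' : h u = t := (Finset.mem_filter.mp hu).2
  ext ω
  simp only [Finset.mem_filter, Finset.mem_univ, true_and]
  exact ⟨fun h' => h'.2, fun h' => ⟨by rw [h']; exact hu', h'⟩⟩

lemma pm_pair_snd (X : Ω → V) (Z : Ω → U) (u : U) :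
    ∑ v, pm μ (fun ω => (X ω, Z ω)) (v, u) = pm μ Z u := by
  simp only [pm]
  rw [← Finset.sum_fiberwise_of_maps_to
      (s := Finset.univ.filter (fun ω => Z ω = u)) (t := (Finset.univ : Finset V)) (g := X)
      (fun ω _ => Finset.mem_univ _) μ]
  refine Finset.sum_congr rfl fun v _ => Finset.sum_congr ?_ (fun _ _ => rfl)
  ext ω
  simp only [Finset.mem_filter, Finset.mem_univ, true_and, Prod.mk.injEq]
  tauto

lemma pm_pair_comp (X : Ω → V) (Z : Ω → U) (g : U → U') (v : V) (w : U') :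
    pm μ (fun ω => (X ω, g (Z ω))) (v, w) =
      ∑ u ∈ Finset.univ.filter (fun u => g u = w), pm μ (fun ω => (X ω, Z ω)) (v, u) := by
  simp only [pm]
  rw [← Finset.sum_fiberwise_of_maps_to
      (s := Finset.univ.filter (fun ω => (X ω, g (Z ω)) = (v, w)))
      (t := Finset.univ.filter (fun u => g u = w)) (g := Z)
      (fun ω hω => Finset.mem_filter.mpr
        ⟨Finset.mem_univ _, congrArg Prod.snd (Finset.mem_filter.mp hω).2⟩) μ]
  refine Finset.sum_congr rfl fun u hu => Finset.sum_congr ?_ (fun _ _ => rfl)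
  have hu' : g u = w := (Finset.mem_filter.mp hu).2
  ext ω
  simp only [Finset.mem_filter, Finset.mem_univ, true_and, Prod.mk.injEq]
  constructor
  · rintro ⟨⟨h1, _⟩, h3⟩; exact ⟨h1, h3⟩
  · rintro ⟨h1, h2⟩; exact ⟨⟨h1, by rw [h2]; exact hu'⟩, h2⟩

lemma pm_pair_le (hμ : ∀ ω, 0 ≤ μ ω) (X : Ω → V) (Z : Ω → U) (v : V) (u : U) :
    pm μ (fun ω => (X ω, Z ω)) (v, u) ≤ pm μ Z u := by
  apply Finset.sum_le_sum_of_subset_of_nonneg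
  · intro ω hω
    simp only [Finset.mem_filter, Finset.mem_univ, true_and, Prod.mk.injEq] at hω ⊢
    exact hω.2
  · exact fun ω _ _ => hμ ω

lemma negMulLog_sum_le {ι : Type*} (s : Finset ι) (a : ι → ℝ) (ha : ∀ i ∈ s, 0 ≤ a i) :
    Real.negMulLog (∑ i ∈ s, a i) ≤ ∑ i ∈ s, Real.negMulLog (a i) := by
  have hS0 : 0 ≤ ∑ i ∈ s, a i := Finset.sum_nonneg ha
  rcases eq_or_lt_of_le hS0 with h0 | hpos
  · have hz := (Finset.sum_eq_zero_iff_of_nonneg ha).mp h0.symm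
    rw [← h0, Real.negMulLog_zero]
    apply le_of_eq
    symm
    exact Finset.sum_eq_zero fun i hi => by rw [hz i hi, Real.negMulLog_zero]
  · have hrw : Real.negMulLog (∑ i ∈ s, a i) = ∑ i ∈ s, a i * (- Real.log (∑ j ∈ s, a j)) := by
      rw [← Finset.sum_mul]
      simp only [Real.negMulLog]
      ring
    rw [hrw]
    apply Finset.sum_le_sum
    intro i hi
    rcases (ha i hi).eq_or_lt with h0i | hposi
    · rw [← h0i]; simp
    · have hle : Real.log (a i) ≤ Real.log (∑ j ∈ s, a j) :=
        Real.log_le_log hposi (Finset.single_le_sum ha hi)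
      have : a i * (- Real.log (∑ j ∈ s, a j)) ≤ a i * (- Real.log (a i)) :=
        mul_le_mul_of_nonneg_left (by linarith) (le_of_lt hposi)
      calc a i * (- Real.log (∑ j ∈ s, a j)) ≤ a i * (- Real.log (a i)) := this
        _ = Real.negMulLog (a i) := by simp only [Real.negMulLog]; ring

lemma sum_mul_log_le {ι : Type*} (s : Finset ι) (a b : ι → ℝ) (ha : ∀ i ∈ s, 0 ≤ a i)
    (hab : ∀ i ∈ s, a i ≤ b i) :
    ∑ i ∈ s, a i * (Real.log (b i) - Real.log (a i)) ≤
      (∑ i ∈ s, a i) * (Real.log (∑ i ∈ s, b i) - Real.log (∑ i ∈ s, a i)) := by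
  set A := ∑ i ∈ s, a i with hA
  set B := ∑ i ∈ s, b i with hB
  have hA0 : 0 ≤ A := Finset.sum_nonneg ha
  have hAB : A ≤ B := Finset.sum_le_sum hab
  rcases eq_or_lt_of_le hA0 with h0 | hApos
  · have hz := (Finset.sum_eq_zero_iff_of_nonneg ha).mp h0.symm
    have hL : ∑ i ∈ s, a i * (Real.log (b i) - Real.log (a i)) = 0 :=
      Finset.sum_eq_zero fun i hi => by rw [hz i hi, zero_mul]
    rw [hL, ← h0, zero_mul]
  · have hBpos : 0 < B := lt_of_lt_of_le hApos hAB
    have key : ∀ i ∈ s, a i * (Real.log (b i) - Real.log (a i)) -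
        a i * (Real.log B - Real.log A) ≤ b i * (A / B) - a i := by
      intro i hi
      rcases (ha i hi).eq_or_lt with h0i | hposi
      · rw [← h0i]
        simp only [zero_mul, sub_zero, sub_self, zero_sub, neg_zero]
        exact mul_nonneg (le_trans (ha i hi) (hab i hi)) (by positivity)
      · have hbpos : 0 < b i := lt_of_lt_of_le hposi (hab i hi)
        have hlog : Real.log (b i) - Real.log (a i) - (Real.log B - Real.log A)
            = Real.log ((b i * A) / (a i * B)) := by
          rw [Real.log_div (by positivity) (by positivity),
            Real.log_mul (ne_of_gt hbpos) (ne_of_gt hApos),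
            Real.log_mul (ne_of_gt hposi) (ne_of_gt hBpos)]
          ring
        have hle : Real.log ((b i * A) / (a i * B)) ≤ (b i * A) / (a i * B) - 1 :=
          Real.log_le_sub_one_of_pos (by positivity)
        calc a i * (Real.log (b i) - Real.log (a i)) - a i * (Real.log B - Real.log A)
            = a i * (Real.log ((b i * A) / (a i * B))) := by rw [← hlog]; ring
          _ ≤ a i * ((b i * A) / (a i * B) - 1) :=
              mul_le_mul_of_nonneg_left hle (le_of_lt hposi)
          _ = b i * (A / B) - a i := by field_simp
    have hsum := Finset.sum_le_sum key
    have h1 : ∑ i ∈ s, (b i * (A / B) - a i) = 0 := by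
      rw [Finset.sum_sub_distrib, ← Finset.sum_mul, ← hB, ← hA]
      field_simp
      ring
    have h2 : ∑ i ∈ s, (a i * (Real.log (b i) - Real.log (a i)) - a i * (Real.log B - Real.log A))
        = (∑ i ∈ s, a i * (Real.log (b i) - Real.log (a i))) - A * (Real.log B - Real.log A) := by
      rw [Finset.sum_sub_distrib, ← Finset.sum_mul, ← hA]
    rw [h2, h1] at hsum
    linarith


lemma entropy_comp_le (hμ : ∀ ω, 0 ≤ μ ω) (X : Ω → V) (f : V → U) :
    entropy μ (fun ω => f (X ω)) ≤ entropy μ X := by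
  rw [entropy_eq, entropy_eq]
  calc ∑ w, Real.negMulLog (pm μ (fun ω => f (X ω)) w)
      ≤ ∑ w, ∑ v ∈ Finset.univ.filter (fun v => f v = w), Real.negMulLog (pm μ X v) := by
        apply Finset.sum_le_sum
        intro w _
        rw [pm_fiber X f w]
        exact negMulLog_sum_le _ _ (fun v _ => pm_nonneg hμ X v)
    _ = ∑ v, Real.negMulLog (pm μ X v) :=
        Finset.sum_fiberwise_of_maps_to (fun v _ => Finset.mem_univ _) _

lemma entropy_congr (hμ : ∀ ω, 0 ≤ μ ω) {X : Ω → V} {Y : Ω → U} (f : V → U) (g : U → V)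
    (hf : ∀ ω, f (X ω) = Y ω) (hg : ∀ ω, g (Y ω) = X ω) : entropy μ X = entropy μ Y := by
  apply le_antisymm
  · have h := entropy_comp_le (μ := μ) hμ Y g
    rw [show (fun ω => g (Y ω)) = X from funext hg] at h
    exact h
  · have h := entropy_comp_le (μ := μ) hμ X f
    rw [show (fun ω => f (X ω)) = Y from funext hf] at h
    exact h

lemma condEntropy_congr_right (hμ : ∀ ω, 0 ≤ μ ω) {X : Ω → V} {Z : Ω → U} {Z' : Ω → U'}
    (f : U → U') (g : U' → U) (hf : ∀ ω, f (Z ω) = Z' ω) (hg : ∀ ω, g (Z' ω) = Z ω) :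
    condEntropy μ X Z = condEntropy μ X Z' := by
  have e1 : entropy μ (fun ω => (X ω, Z ω)) = entropy μ (fun ω => (X ω, Z' ω)) :=
    entropy_congr hμ (fun p => (p.1, f p.2)) (fun p => (p.1, g p.2))
      (fun ω => by dsimp only; rw [hf ω]) (fun ω => by dsimp only; rw [hg ω])
  have e2 : entropy μ Z = entropy μ Z' := entropy_congr hμ f g hf hg
  simp only [condEntropy]
  rw [e1, e2]

lemma condEntropy_congr_left (hμ : ∀ ω, 0 ≤ μ ω) {X : Ω → V} {X' : Ω → U'} {Z : Ω → U}
    (f : V → U') (g : U' → V) (hf : ∀ ω, f (X ω) = X' ω) (hg : ∀ ω, g (X' ω) = X ω) :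
    condEntropy μ X Z = condEntropy μ X' Z := by
  have e1 : entropy μ (fun ω => (X ω, Z ω)) = entropy μ (fun ω => (X' ω, Z ω)) :=
    entropy_congr hμ (fun p => (f p.1, p.2)) (fun p => (g p.1, p.2))
      (fun ω => by dsimp only; rw [hf ω]) (fun ω => by dsimp only; rw [hg ω])
  simp only [condEntropy]
  rw [e1]

lemma condEntropy_chain (hμ : ∀ ω, 0 ≤ μ ω) (X : Ω → V) (Y : Ω → U) (Z : Ω → U') :
    condEntropy μ (fun ω => (X ω, Y ω)) Z =
      condEntropy μ X (fun ω => (Y ω, Z ω)) + condEntropy μ Y Z := by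
  simp only [condEntropy]
  have e : entropy μ (fun ω => ((X ω, Y ω), Z ω)) = entropy μ (fun ω => (X ω, (Y ω, Z ω))) :=
    entropy_congr hμ (fun p => (p.1.1, (p.1.2, p.2))) (fun p => ((p.1, p.2.1), p.2.2))
      (fun ω => rfl) (fun ω => rfl)
  rw [e]
  ring

lemma condEntropy_nonneg (hμ : ∀ ω, 0 ≤ μ ω) (X : Ω → V) (Z : Ω → U) :
    0 ≤ condEntropy μ X Z := by
  have h := entropy_comp_le (μ := μ) hμ (fun ω => (X ω, Z ω)) Prod.snd
  exact sub_nonneg.mpr h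

lemma condEntropy_formula (X : Ω → V) (Z : Ω → U) :
    condEntropy μ X Z = ∑ v, ∑ u, pm μ (fun ω => (X ω, Z ω)) (v, u) *
      (Real.log (pm μ Z u) - Real.log (pm μ (fun ω => (X ω, Z ω)) (v, u))) := by
  simp only [condEntropy]
  rw [entropy_eq, entropy_eq]
  have h1 : ∑ p : V × U, Real.negMulLog (pm μ (fun ω => (X ω, Z ω)) p)
      = ∑ v, ∑ u, Real.negMulLog (pm μ (fun ω => (X ω, Z ω)) (v, u)) :=
    Fintype.sum_prod_type _
  have h2 : ∑ u, Real.negMulLog (pm μ Z u)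
      = ∑ v, ∑ u, pm μ (fun ω => (X ω, Z ω)) (v, u) * (- Real.log (pm μ Z u)) := by
    rw [Finset.sum_comm]
    apply Finset.sum_congr rfl
    intro u _
    rw [← Finset.sum_mul, pm_pair_snd]
    simp only [Real.negMulLog]
    ring
  rw [h1, h2, ← Finset.sum_sub_distrib]
  refine Finset.sum_congr rfl fun v _ => ?_
  rw [← Finset.sum_sub_distrib]
  refine Finset.sum_congr rfl fun u _ => ?_
  simp only [Real.negMulLog]
  ring

lemma condEntropy_comp_le (hμ : ∀ ω, 0 ≤ μ ω) (X : Ω → V) (Z : Ω → U) (g : U → U') :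
    condEntropy μ X Z ≤ condEntropy μ X (fun ω => g (Z ω)) := by
  rw [condEntropy_formula, condEntropy_formula]
  apply Finset.sum_le_sum
  intro v _
  have split : ∑ u, pm μ (fun ω => (X ω, Z ω)) (v, u) *
        (Real.log (pm μ Z u) - Real.log (pm μ (fun ω => (X ω, Z ω)) (v, u)))
      = ∑ w, ∑ u ∈ Finset.univ.filter (fun u => g u = w),
          pm μ (fun ω => (X ω, Z ω)) (v, u) *
          (Real.log (pm μ Z u) - Real.log (pm μ (fun ω => (X ω, Z ω)) (v, u))) :=
    (Finset.sum_fiberwise_of_maps_to (fun u _ => Finset.mem_univ _) _).symm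
  rw [split]
  apply Finset.sum_le_sum
  intro w _
  have key := sum_mul_log_le (Finset.univ.filter (fun u => g u = w))
    (fun u => pm μ (fun ω => (X ω, Z ω)) (v, u)) (fun u => pm μ Z u)
    (fun u _ => pm_nonneg hμ _ _) (fun u _ => pm_pair_le hμ X Z v u)
  rw [pm_pair_comp X Z g v w, pm_fiber Z g w]
  exact key

lemma entropy_const (hμ1 : ∑ ω, μ ω = 1) (c : V) : entropy μ (fun _ => c) = 0 := by
  rw [entropy_eq]
  apply Finset.sum_eq_zero
  intro v _
  by_cases h : v = c
  · subst h
    have h1 : pm μ (fun _ : Ω => v) v = 1 := by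
      simp only [pm]
      simpa using hμ1
    rw [h1, Real.negMulLog_one]
  · have h0 : pm μ (fun _ : Ω => c) v = 0 := by
      simp only [pm]
      rw [Finset.filter_false_of_mem (fun ω _ => fun hc => h hc.symm)]
      exact Finset.sum_empty
    rw [h0, Real.negMulLog_zero]

lemma condEntropy_const (hμ : ∀ ω, 0 ≤ μ ω) (c : V) (Y : Ω → U) :
    condEntropy μ (fun _ => c) Y = 0 := by
  simp only [condEntropy]
  have e : entropy μ (fun ω => (c, Y ω)) = entropy μ Y :=
    entropy_congr hμ Prod.snd (fun u => (c, u)) (fun ω => rfl) (fun ω => rfl)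
  rw [e, sub_self]

lemma condEntropy_unit (hμ : ∀ ω, 0 ≤ μ ω) (hμ1 : ∑ ω, μ ω = 1) (X : Ω → V) :
    condEntropy μ X (fun _ => ()) = entropy μ X := by
  simp only [condEntropy]
  rw [entropy_const hμ1 (), sub_zero]
  exact entropy_congr hμ Prod.fst (fun v => (v, ())) (fun ω => rfl) (fun ω => rfl)

lemma condEntropy_le_entropy (hμ : ∀ ω, 0 ≤ μ ω) (hμ1 : ∑ ω, μ ω = 1)
    (X : Ω → V) (Z : Ω → U) : condEntropy μ X Z ≤ entropy μ X := by
  calc condEntropy μ X Z ≤ condEntropy μ X (fun ω => (fun _ : U => ()) (Z ω)) :=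
        condEntropy_comp_le hμ X Z (fun _ => ())
    _ = entropy μ X := condEntropy_unit hμ hμ1 X


section Joint

variable {N : ℕ} {β : Type*} [Fintype β] [DecidableEq β]

lemma jointOn_restrict (B : Fin N → Ω → β) {T S : Finset (Fin N)} (h : T ⊆ S) (ω : Ω) :
    (fun i => if i ∈ T then jointOn S B ω i else none) = jointOn T B ω := by
  funext i
  by_cases hi : i ∈ T
  · simp [jointOn, hi, h hi]
  · simp [jointOn, hi]

lemma condEntropy_jointOn_mono (hμ : ∀ ω, 0 ≤ μ ω) (B : Fin N → Ω → β)
    {T S : Finset (Fin N)} (h : T ⊆ S) (Y : Ω → U) :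
    condEntropy μ (jointOn T B) Y ≤ condEntropy μ (jointOn S B) Y := by
  simp only [condEntropy]
  have hent : entropy μ (fun ω => (jointOn T B ω, Y ω))
      ≤ entropy μ (fun ω => (jointOn S B ω, Y ω)) := by
    have h2 := entropy_comp_le (μ := μ) hμ (fun ω => (jointOn S B ω, Y ω))
      (fun p => ((fun i => if i ∈ T then p.1 i else none), p.2))
    have he : (fun ω => ((fun p : (Fin N → Option β) × U =>
          ((fun i => if i ∈ T then p.1 i else none), p.2)) ((jointOn S B ω, Y ω))))
        = fun ω => (jointOn T B ω, Y ω) := by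
      funext ω
      dsimp only
      rw [jointOn_restrict B h ω]
    rw [he] at h2
    exact h2
  linarith

lemma condEntropy_cond_jointOn_mono (hμ : ∀ ω, 0 ≤ μ ω) (X : Ω → V) (B : Fin N → Ω → β)
    {T S : Finset (Fin N)} (h : T ⊆ S) (Y : Ω → U) :
    condEntropy μ X (fun ω => (jointOn S B ω, Y ω))
      ≤ condEntropy μ X (fun ω => (jointOn T B ω, Y ω)) := by
  have h2 := condEntropy_comp_le (μ := μ) hμ X (fun ω => (jointOn S B ω, Y ω))
    (fun p => ((fun i => if i ∈ T then p.1 i else none), p.2))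
  have he : (fun ω => ((fun p : (Fin N → Option β) × U =>
        ((fun i => if i ∈ T then p.1 i else none), p.2)) ((jointOn S B ω, Y ω))))
      = fun ω => (jointOn T B ω, Y ω) := by
    funext ω
    dsimp only
    rw [jointOn_restrict B h ω]
  rw [he] at h2
  exact h2

lemma jointOn_chain (hμ : ∀ ω, 0 ≤ μ ω) [Inhabited β] (B : Fin N → Ω → β) (Y : Ω → U)
    (S : Finset (Fin N)) :
    condEntropy μ (jointOn S B) Y =
      ∑ i ∈ S, condEntropy μ (B i)
        (fun ω => (jointOn (S.filter (fun j => j < i)) B ω, Y ω)) := by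
  induction S using Finset.strongInduction with
  | _ S ih =>
    rcases S.eq_empty_or_nonempty with rfl | hne
    · rw [Finset.sum_empty]
      have hco : jointOn (∅ : Finset (Fin N)) B = fun _ => (fun _ => none) := by
        funext ω i
        simp [jointOn]
      rw [hco]
      exact condEntropy_const hμ _ Y
    · set m := S.max' hne with hm
      have hmS : m ∈ S := S.max'_mem hne
      set S' := S.erase m with hS'
      have hsub : S' ⊂ S := Finset.erase_ssubset hmS
      have hcongr : condEntropy μ (jointOn S B) Y =
          condEntropy μ (fun ω => (B m ω, jointOn S' B ω)) Y := by
        apply condEntropy_congr_left hμ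
          (f := fun p : Fin N → Option β =>
            ((p m).getD default, fun i => if i ∈ S' then p i else none))
          (g := fun q : β × (Fin N → Option β) => fun i => if i = m then some q.1 else q.2 i)
        · intro ω
          refine Prod.ext ?_ ?_
          · simp [jointOn, hmS]
          · exact jointOn_restrict B (Finset.erase_subset m S) ω
        · intro ω
          funext i
          dsimp only
          by_cases hi : i = m
          · subst hi
            simp [jointOn, hmS]
          · simp only [hi, if_false, jointOn, hS', Finset.mem_erase, Ne, not_false_iff,
              true_and]
      have hfm : S.filter (fun j => j < m) = S' := by
        ext j
        simp only [Finset.mem_filter, hS', Finset.mem_erase]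
        constructor
        · rintro ⟨hjS, hlt⟩
          exact ⟨ne_of_lt hlt, hjS⟩
        · rintro ⟨hne', hjS⟩
          exact ⟨hjS, lt_of_le_of_ne (S.le_max' j hjS) hne'⟩
      have hfi : ∀ i ∈ S', S.filter (fun j => j < i) = S'.filter (fun j => j < i) := by
        intro i hi
        have him : i < m :=
          lt_of_le_of_ne (S.le_max' i (Finset.mem_of_mem_erase hi)) (Finset.ne_of_mem_erase hi)
        ext j
        simp only [Finset.mem_filter, hS', Finset.mem_erase]
        constructor
        · rintro ⟨hjS, hji⟩
          exact ⟨⟨ne_of_lt (lt_trans hji him), hjS⟩, hji⟩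
        · rintro ⟨⟨_, hjS⟩, hji⟩
          exact ⟨hjS, hji⟩
      have hgoal : ∑ i ∈ S, condEntropy μ (B i)
            (fun ω => (jointOn (S.filter (fun j => j < i)) B ω, Y ω))
          = condEntropy μ (B m) (fun ω => (jointOn S' B ω, Y ω))
            + ∑ i ∈ S', condEntropy μ (B i)
                (fun ω => (jointOn (S'.filter (fun j => j < i)) B ω, Y ω)) := by
        rw [← Finset.add_sum_erase S _ hmS, ← hS', hfm]
        congr 1
        exact Finset.sum_congr rfl fun i hi => by rw [hfi i hi]
      rw [hcongr, condEntropy_chain hμ (B m) (jointOn S' B) Y, ih S' hsub, hgoal]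

lemma shearer (hμ : ∀ ω, 0 ≤ μ ω) [Inhabited β] (B : Fin N → Ω → β) (Y : Ω → U)
    (Γ : Fin N → Finset (Fin N)) (c : ℕ)
    (hc : ∀ i, c ≤ (Finset.univ.filter (fun j => i ∈ Γ j)).card) :
    (c : ℝ) * condEntropy μ (jointOn Finset.univ B) Y ≤
      ∑ j : Fin N, condEntropy μ (jointOn (Γ j) B) Y := by
  set g : Fin N → ℝ := fun i => condEntropy μ (B i)
    (fun ω => (jointOn (Finset.univ.filter (fun j => j < i)) B ω, Y ω)) with hg
  have hg0 : ∀ i, 0 ≤ g i := fun i => condEntropy_nonneg hμ _ _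
  have h1 : ∀ j, ∑ i ∈ Γ j, g i ≤ condEntropy μ (jointOn (Γ j) B) Y := by
    intro j
    rw [jointOn_chain hμ B Y (Γ j)]
    apply Finset.sum_le_sum
    intro i hi
    exact condEntropy_cond_jointOn_mono hμ _ _
      (fun x hx => Finset.mem_filter.mpr
        ⟨Finset.mem_univ _, (Finset.mem_filter.mp hx).2⟩) _
  have h2 : condEntropy μ (jointOn Finset.univ B) Y = ∑ i, g i :=
    jointOn_chain hμ B Y Finset.univ
  have h3 : ∑ j : Fin N, ∑ i ∈ Γ j, g i
      = ∑ i : Fin N, ((Finset.univ.filter (fun j => i ∈ Γ j)).card : ℝ) * g i := by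
    calc ∑ j : Fin N, ∑ i ∈ Γ j, g i
        = ∑ j : Fin N, ∑ i : Fin N, if i ∈ Γ j then g i else 0 := by
          refine Finset.sum_congr rfl fun j _ => ?_
          rw [Finset.sum_ite_mem, Finset.univ_inter]
      _ = ∑ i : Fin N, ∑ j : Fin N, if i ∈ Γ j then g i else 0 := Finset.sum_comm
      _ = ∑ i : Fin N, ((Finset.univ.filter (fun j => i ∈ Γ j)).card : ℝ) * g i := by
          refine Finset.sum_congr rfl fun i _ => ?_
          rw [← Finset.sum_filter, Finset.sum_const, nsmul_eq_mul]
  have h4 : ∑ i : Fin N, (c : ℝ) * g i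
      ≤ ∑ i : Fin N, ((Finset.univ.filter (fun j => i ∈ Γ j)).card : ℝ) * g i :=
    Finset.sum_le_sum fun i _ =>
      mul_le_mul_of_nonneg_right (Nat.cast_le.mpr (hc i)) (hg0 i)
  calc (c : ℝ) * condEntropy μ (jointOn Finset.univ B) Y
      = ∑ i : Fin N, (c : ℝ) * g i := by rw [h2, Finset.mul_sum]
    _ ≤ ∑ i : Fin N, ((Finset.univ.filter (fun j => i ∈ Γ j)).card : ℝ) * g i := h4
    _ = ∑ j : Fin N, ∑ i ∈ Γ j, g i := h3.symm
    _ ≤ ∑ j : Fin N, condEntropy μ (jointOn (Γ j) B) Y := Finset.sum_le_sum fun j _ => h1 j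

end Joint

section Window

open Fin.NatCast

/-- cyclic window of length `K` starting at `j` -/
def window (N K : ℕ) [NeZero N] (j : Fin N) : Finset (Fin N) :=
  (Finset.range K).image (fun t : ℕ => j + (t : Fin N))

lemma window_card {N K : ℕ} [NeZero N] (hKN : K ≤ N) (j : Fin N) :
    (window N K j).card = K := by
  rw [window, Finset.card_image_of_injOn, Finset.card_range]
  intro t₁ h₁ t₂ h₂ h
  simp only [Finset.coe_range, Set.mem_Iio] at h₁ h₂
  have hval := add_left_cancel h
  have h₁' : t₁ < N := lt_of_lt_of_le h₁ hKN
  have h₂' : t₂ < N := lt_of_lt_of_le h₂ hKN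
  calc t₁ = ((t₁ : Fin N) : ℕ) := (Fin.val_cast_of_lt h₁').symm
    _ = ((t₂ : Fin N) : ℕ) := by rw [hval]
    _ = t₂ := Fin.val_cast_of_lt h₂'

lemma window_count {N K : ℕ} [NeZero N] (hKN : K ≤ N) (i : Fin N) :
    (Finset.univ.filter (fun j : Fin N => i ∈ window N K j)).card = K := by
  have hset : Finset.univ.filter (fun j : Fin N => i ∈ window N K j)
      = (Finset.range K).image (fun t : ℕ => i - (t : Fin N)) := by
    ext j
    simp only [Finset.mem_filter, Finset.mem_univ, true_and, window, Finset.mem_image,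
      Finset.mem_range]
    constructor
    · rintro ⟨t, ht, hjt⟩
      refine ⟨t, ht, ?_⟩
      rw [← hjt]
      exact add_sub_cancel_right _ _
    · rintro ⟨t, ht, hij⟩
      refine ⟨t, ht, ?_⟩
      rw [← hij]
      exact sub_add_cancel _ _
  rw [hset, Finset.card_image_of_injOn, Finset.card_range]
  intro t₁ h₁ t₂ h₂ h
  simp only [Finset.coe_range, Set.mem_Iio] at h₁ h₂
  have hval : (t₁ : Fin N) = (t₂ : Fin N) := sub_right_inj.mp h
  have h₁' : t₁ < N := lt_of_lt_of_le h₁ hKN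
  have h₂' : t₂ < N := lt_of_lt_of_le h₂ hKN
  calc t₁ = ((t₁ : Fin N) : ℕ) := (Fin.val_cast_of_lt h₁').symm
    _ = ((t₂ : Fin N) : ℕ) := by rw [hval]
    _ = t₂ := Fin.val_cast_of_lt h₂'

end Window

end PIR5


open PIR5

/-- Lemma 5: entropy identities for capacity-achieving coded PIR schemes, where
`D = L · ∑_{i=0}^{M-1} (K/N)^i` is the download size:
(a) `H(A_θ^{[N]} | Q) = D`, (b) `H(A_θ^{[N]} | W_θ, Q) = D - L`,
(c) `H(A_θ^{[N]} | W_{[M]∖{θ}}, Q) = L`. -/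
theorem capacity_achieving_entropy_identities
    {Ω α γ δ : Type*} [Fintype Ω] [Fintype α] [Fintype γ] [Fintype δ]
    [DecidableEq α] [DecidableEq γ] [DecidableEq δ]
    (N K M : ℕ) (hK : 1 ≤ K) (hKN : K ≤ N) (hM : 1 ≤ M) (L : ℝ) (hL : 0 ≤ L)
    (μ : Ω → ℝ) (hμ : ∀ ω, 0 ≤ μ ω) (hμ1 : ∑ ω, μ ω = 1)
    (A : Fin M → Fin N → Ω → α) (W : Fin M → Ω → γ) (Q : Ω → δ)
    (D : ℝ) (hD : D = L * ∑ i ∈ Finset.range M, ((K : ℝ) / N) ^ i)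
    (hsym : ∀ θ θ' : Fin M, ∀ Λ : Finset (Fin M), ∀ Γ : Finset (Fin N), Γ.card = K →
      condEntropy μ (jointOn Γ (A θ)) (fun ω => (jointOn Λ W ω, Q ω)) =
        condEntropy μ (jointOn Γ (A θ')) (fun ω => (jointOn Λ W ω, Q ω)))
    (hcorr : ∀ θ : Fin M, ∀ Λ : Finset (Fin M),
      condEntropy μ (W θ)
        (fun ω => (jointOn Finset.univ (A θ) ω, jointOn Λ W ω, Q ω)) = 0)
    (hrec : ∀ Λ : Finset (Fin M), ∀ θ : Fin M, θ ∉ Λ →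
      condEntropy μ (W θ) (fun ω => (jointOn Λ W ω, Q ω)) = L)
    (hdet : ∀ θ : Fin M,
      condEntropy μ (jointOn Finset.univ (A θ))
        (fun ω => (jointOn Finset.univ W ω, Q ω)) = 0)
    (hcap : ∀ θ : Fin M, ∑ i : Fin N, entropy μ (A θ i) = D) :
    ∀ θ : Fin M,
      condEntropy μ (jointOn Finset.univ (A θ)) Q = D ∧
      condEntropy μ (jointOn Finset.univ (A θ)) (fun ω => (W θ ω, Q ω)) = D - L ∧
      condEntropy μ (jointOn Finset.univ (A θ))
        (fun ω => (jointOn (Finset.univ \ {θ}) W ω, Q ω)) = L := by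
  classical
  -- nonemptiness
  rcases isEmpty_or_nonempty Ω with hΩ | hΩ
  · rw [Finset.univ_eq_empty, Finset.sum_empty] at hμ1
    exact absurd hμ1 (by norm_num)
  obtain ⟨ω₀⟩ := hΩ
  have hN : 0 < N := lt_of_lt_of_le hK hKN
  haveI : NeZero N := ⟨by omega⟩
  haveI : Inhabited γ := ⟨W ⟨0, hM⟩ ω₀⟩
  haveI : Inhabited α := ⟨A ⟨0, hM⟩ ⟨0, hN⟩ ω₀⟩
  obtain ⟨M', rfl⟩ : ∃ M', M = M' + 1 := ⟨M - 1, by omega⟩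
  set r : ℝ := (K : ℝ) / N with hr
  have hr0 : 0 ≤ r := by positivity
  have hNpos : (0 : ℝ) < N := by exact_mod_cast hN
  -- step equality
  have SE : ∀ (Λ : Finset (Fin (M' + 1))) (θ' : Fin (M' + 1)), θ' ∉ Λ →
      condEntropy μ (jointOn Finset.univ (A θ')) (fun ω => (jointOn Λ W ω, Q ω)) =
        L + condEntropy μ (jointOn Finset.univ (A θ'))
              (fun ω => (jointOn (insert θ' Λ) W ω, Q ω)) := by
    intro Λ θ' hθ'
    have c1 : condEntropy μ (fun ω => (W θ' ω, jointOn Finset.univ (A θ') ω))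
          (fun ω => (jointOn Λ W ω, Q ω))
        = condEntropy μ (W θ')
            (fun ω => (jointOn Finset.univ (A θ') ω, (jointOn Λ W ω, Q ω)))
          + condEntropy μ (jointOn Finset.univ (A θ')) (fun ω => (jointOn Λ W ω, Q ω)) :=
      condEntropy_chain hμ _ _ _
    have c2 : condEntropy μ (fun ω => (jointOn Finset.univ (A θ') ω, W θ' ω))
          (fun ω => (jointOn Λ W ω, Q ω))
        = condEntropy μ (jointOn Finset.univ (A θ'))
            (fun ω => (W θ' ω, (jointOn Λ W ω, Q ω)))
          + condEntropy μ (W θ') (fun ω => (jointOn Λ W ω, Q ω)) :=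
      condEntropy_chain hμ _ _ _
    have cswap : condEntropy μ (fun ω => (W θ' ω, jointOn Finset.univ (A θ') ω))
          (fun ω => (jointOn Λ W ω, Q ω))
        = condEntropy μ (fun ω => (jointOn Finset.univ (A θ') ω, W θ' ω))
            (fun ω => (jointOn Λ W ω, Q ω)) :=
      condEntropy_congr_left hμ Prod.swap Prod.swap (fun ω => rfl) (fun ω => rfl)
    have hc : condEntropy μ (W θ')
        (fun ω => (jointOn Finset.univ (A θ') ω, (jointOn Λ W ω, Q ω))) = 0 := hcorr θ' Λ
    have hrL : condEntropy μ (W θ') (fun ω => (jointOn Λ W ω, Q ω)) = L := hrec Λ θ' hθ'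
    have hins : condEntropy μ (jointOn Finset.univ (A θ'))
          (fun ω => (W θ' ω, (jointOn Λ W ω, Q ω)))
        = condEntropy μ (jointOn Finset.univ (A θ'))
            (fun ω => (jointOn (insert θ' Λ) W ω, Q ω)) := by
      apply condEntropy_congr_right hμ
        (f := fun p : γ × ((Fin (M' + 1) → Option γ) × δ) =>
          ((fun j => if j = θ' then some p.1 else p.2.1 j), p.2.2))
        (g := fun p : (Fin (M' + 1) → Option γ) × δ =>
          ((p.1 θ').getD default, ((fun j => if j ∈ Λ then p.1 j else none), p.2)))
      · intro ω
        dsimp only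
        refine Prod.ext ?_ rfl
        funext j
        by_cases hj : j = θ'
        · subst hj
          simp [jointOn]
        · simp [jointOn, Finset.mem_insert, hj]
      · intro ω
        dsimp only
        refine Prod.ext ?_ (Prod.ext ?_ rfl)
        · simp [jointOn]
        · exact jointOn_restrict W (Finset.subset_insert θ' Λ) ω
    rw [← hins, ← hrL]
    linarith [c1, c2, cswap, hc]
  -- recursion inequality
  have RI : ∀ (Λ : Finset (Fin (M' + 1))) (θ θ' : Fin (M' + 1)), θ' ∉ Λ →
      r * (L + condEntropy μ (jointOn Finset.univ (A θ'))
            (fun ω => (jointOn (insert θ' Λ) W ω, Q ω)))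
        ≤ condEntropy μ (jointOn Finset.univ (A θ)) (fun ω => (jointOn Λ W ω, Q ω)) := by
    intro Λ θ θ' hθ'
    rw [← SE Λ θ' hθ']
    have hsh : (K : ℝ) * condEntropy μ (jointOn Finset.univ (A θ'))
          (fun ω => (jointOn Λ W ω, Q ω))
        ≤ ∑ j : Fin N, condEntropy μ (jointOn (window N K j) (A θ'))
            (fun ω => (jointOn Λ W ω, Q ω)) :=
      shearer hμ (A θ') (fun ω => (jointOn Λ W ω, Q ω)) (window N K) K
        (fun i => le_of_eq (window_count hKN i).symm)
    have hbound : ∀ j : Fin N, condEntropy μ (jointOn (window N K j) (A θ'))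
          (fun ω => (jointOn Λ W ω, Q ω))
        ≤ condEntropy μ (jointOn Finset.univ (A θ)) (fun ω => (jointOn Λ W ω, Q ω)) := by
      intro j
      rw [← hsym θ θ' Λ (window N K j) (window_card hKN j)]
      exact condEntropy_jointOn_mono hμ _ (Finset.subset_univ _) _
    have h2 : ∑ j : Fin N, condEntropy μ (jointOn (window N K j) (A θ'))
          (fun ω => (jointOn Λ W ω, Q ω))
        ≤ (N : ℝ) * condEntropy μ (jointOn Finset.univ (A θ))
            (fun ω => (jointOn Λ W ω, Q ω)) := by
      calc ∑ j : Fin N, condEntropy μ (jointOn (window N K j) (A θ'))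
            (fun ω => (jointOn Λ W ω, Q ω))
          ≤ ∑ _j : Fin N, condEntropy μ (jointOn Finset.univ (A θ))
              (fun ω => (jointOn Λ W ω, Q ω)) := Finset.sum_le_sum fun j _ => hbound j
        _ = (N : ℝ) * condEntropy μ (jointOn Finset.univ (A θ))
              (fun ω => (jointOn Λ W ω, Q ω)) := by
            rw [Finset.sum_const, Finset.card_univ, Fintype.card_fin, nsmul_eq_mul]
    rw [hr, div_mul_eq_mul_div, div_le_iff₀ hNpos]
    have := le_trans hsh h2
    nlinarith [condEntropy_nonneg hμ (jointOn Finset.univ (A θ'))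
      (fun ω => (jointOn Λ W ω, Q ω))]
  -- main induction
  have MI : ∀ (m : ℕ) (Λ : Finset (Fin (M' + 1))), (M' + 1) - Λ.card = m →
      ∀ θ : Fin (M' + 1),
      L * (r * ∑ i ∈ Finset.range m, r ^ i) ≤
        condEntropy μ (jointOn Finset.univ (A θ)) (fun ω => (jointOn Λ W ω, Q ω)) := by
    intro m
    induction m with
    | zero => intro Λ _ θ; simpa using condEntropy_nonneg hμ _ _
    | succ m ih =>
      intro Λ hΛ θ
      have hΛle : Λ.card ≤ M' + 1 := by
        simpa using Finset.card_le_card (Finset.subset_univ Λ)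
      have hΛcard : Λ.card < M' + 1 := by omega
      have hexists : ∃ θ' : Fin (M' + 1), θ' ∉ Λ := by
        by_contra h
        push_neg at h
        have : Λ = Finset.univ := Finset.eq_univ_iff_forall.mpr h
        rw [this, Finset.card_univ, Fintype.card_fin] at hΛcard
        omega
      obtain ⟨θ', hθ'⟩ := hexists
      have hcard' : (M' + 1) - (insert θ' Λ).card = m := by
        rw [Finset.card_insert_of_notMem hθ']
        omega
      have hIH := ih (insert θ' Λ) hcard' θ'
      have hRI := RI Λ θ θ' hθ'
      have hgeom : L * (r * ∑ i ∈ Finset.range (m + 1), r ^ i)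
          = r * (L + L * (r * ∑ i ∈ Finset.range m, r ^ i)) := by
        rw [geom_sum_succ]
        ring
      rw [hgeom]
      refine le_trans (mul_le_mul_of_nonneg_left ?_ hr0) hRI
      linarith
  intro θ
  -- conditioner equivalences
  have hQ : condEntropy μ (jointOn Finset.univ (A θ))
        (fun ω => (jointOn (∅ : Finset (Fin (M' + 1))) W ω, Q ω))
      = condEntropy μ (jointOn Finset.univ (A θ)) Q := by
    apply condEntropy_congr_right hμ
      (f := fun p : (Fin (M' + 1) → Option γ) × δ => p.2)
      (g := fun q : δ => ((fun _ => none), q))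
    · intro ω; rfl
    · intro ω
      refine Prod.ext ?_ rfl
      funext i
      simp [jointOn]
  have hWθ : condEntropy μ (jointOn Finset.univ (A θ))
        (fun ω => (jointOn ({θ} : Finset (Fin (M' + 1))) W ω, Q ω))
      = condEntropy μ (jointOn Finset.univ (A θ)) (fun ω => (W θ ω, Q ω)) := by
    apply condEntropy_congr_right hμ
      (f := fun p : (Fin (M' + 1) → Option γ) × δ => ((p.1 θ).getD default, p.2))
      (g := fun q : γ × δ =>
        ((fun j => if j ∈ ({θ} : Finset (Fin (M' + 1))) then some q.1 else none), q.2))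
    · intro ω
      refine Prod.ext ?_ rfl
      dsimp only
      simp [jointOn]
    · intro ω
      refine Prod.ext ?_ rfl
      funext j
      dsimp only
      by_cases hj : j ∈ ({θ} : Finset (Fin (M' + 1)))
      · have hj' : j = θ := Finset.mem_singleton.mp hj
        subst hj'
        simp [jointOn, hj]
      · simp [jointOn, hj]
  have hSE0 : condEntropy μ (jointOn Finset.univ (A θ))
        (fun ω => (jointOn (∅ : Finset (Fin (M' + 1))) W ω, Q ω))
      = L + condEntropy μ (jointOn Finset.univ (A θ))
          (fun ω => (jointOn ({θ} : Finset (Fin (M' + 1))) W ω, Q ω)) := by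
    have h := SE ∅ θ (Finset.notMem_empty θ)
    rwa [show insert θ (∅ : Finset (Fin (M' + 1))) = {θ} from by simp] at h
  have hMI := MI M' {θ} (by simp) θ
  have hDL : D - L = L * (r * ∑ i ∈ Finset.range M', r ^ i) := by
    rw [hD, geom_sum_succ]
    ring
  rw [← hDL] at hMI
  -- upper bound
  have hUB : condEntropy μ (jointOn Finset.univ (A θ)) Q ≤ D := by
    have h1 : condEntropy μ (jointOn Finset.univ (A θ)) Q
        ≤ entropy μ (jointOn Finset.univ (A θ)) := condEntropy_le_entropy hμ hμ1 _ _
    have h2 : entropy μ (jointOn Finset.univ (A θ)) =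
        ∑ i : Fin N, condEntropy μ (A θ i)
          (fun ω => (jointOn (Finset.univ.filter (fun j => j < i)) (A θ) ω, ())) := by
      rw [← condEntropy_unit hμ hμ1]
      exact jointOn_chain hμ (A θ) (fun _ => ()) Finset.univ
    have h3 : entropy μ (jointOn Finset.univ (A θ)) ≤ ∑ i : Fin N, entropy μ (A θ i) := by
      rw [h2]
      apply Finset.sum_le_sum
      intro i _
      have ha : condEntropy μ (A θ i)
            (fun ω => (jointOn (Finset.univ.filter (fun j => j < i)) (A θ) ω, ()))
          ≤ condEntropy μ (A θ i) (fun ω => (jointOn (∅ : Finset (Fin N)) (A θ) ω, ())) :=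
        condEntropy_cond_jointOn_mono hμ _ _ (Finset.empty_subset _) _
      have hb : condEntropy μ (A θ i) (fun ω => (jointOn (∅ : Finset (Fin N)) (A θ) ω, ()))
          = condEntropy μ (A θ i) (fun _ : Ω => ()) :=
        condEntropy_congr_right hμ (f := fun _ => ()) (g := fun _ => ((fun _ => none), ()))
          (fun ω => rfl)
          (fun ω => by refine Prod.ext ?_ rfl; funext k; simp [jointOn])
      exact le_trans ha (le_of_eq (hb.trans (condEntropy_unit hμ hμ1 _)))
    rw [hcap θ] at h3
    exact le_trans h1 h3
  have hxy : condEntropy μ (jointOn Finset.univ (A θ)) Q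
      = L + condEntropy μ (jointOn Finset.univ (A θ))
          (fun ω => (jointOn ({θ} : Finset (Fin (M' + 1))) W ω, Q ω)) := by
    rw [← hQ]
    exact hSE0
  refine ⟨by linarith, ?_, ?_⟩
  · rw [← hWθ]
    linarith
  · have hnm : θ ∉ Finset.univ \ ({θ} : Finset (Fin (M' + 1))) := by simp
    have h := SE (Finset.univ \ {θ}) θ hnm
    rw [show insert θ (Finset.univ \ ({θ} : Finset (Fin (M' + 1)))) = Finset.univ from by
        ext j; by_cases hj : j = θ <;> simp [hj]] at h
    rw [h, hdet θ, add_zero]
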